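/- Let A be a ring and n a positive integer. Then the Grothendieck group K₀ of the matrix ring Mₙ(A) is isomorphic to K₀(A) (Morita invariance of K₀ for matrix rings). -/

import Mathlib

/-!
STATEMENT 16: Let A be a ring and n a positive integer.  Then the Grothendieck
group K₀ of the matrix ring Mₙ(A) is isomorphic to K₀(A) (Morita invariance of
K₀ for matrix rings).

K₀(R) is defined here as the free abelian group on (bundled) finitely generated
projective R-modules, modulo the relations [P] = [Q] for isomorphic modules and
[P ⊕ Q] = [P] + [Q].
-/

universe u

/-- A bundled finitely generated projective module over a ring `R`. -/
structure FGProj (R : Type u) [Ring R] : Type (u + 1) where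
  carrier : Type u
  [addCommGroup : AddCommGroup carrier]
  [module : Module R carrier]
  [finite : Module.Finite R carrier]
  [projective : Module.Projective R carrier]

attribute [instance] FGProj.addCommGroup FGProj.module FGProj.finite FGProj.projective

/-- The subgroup of relations defining K₀: [P] = [Q] for P ≅ Q, and
[S] = [P] + [Q] whenever S ≅ P ⊕ Q. -/
def K0Rels (R : Type u) [Ring R] : AddSubgroup (FreeAbelianGroup (FGProj R)) :=
  AddSubgroup.closure
    ({x | ∃ (P Q : FGProj R) (_ : P.carrier ≃ₗ[R] Q.carrier),
        x = FreeAbelianGroup.of P - FreeAbelianGroup.of Q} ∪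
     {x | ∃ (P Q S : FGProj R) (_ : S.carrier ≃ₗ[R] P.carrier × Q.carrier),
        x = FreeAbelianGroup.of S - FreeAbelianGroup.of P - FreeAbelianGroup.of Q})

/-- The Grothendieck group K₀ of finitely generated projective modules over R. -/
def K0 (R : Type u) [Ring R] : Type (u + 1) :=
  FreeAbelianGroup (FGProj R) ⧸ K0Rels R

instance (R : Type u) [Ring R] : AddCommGroup (K0 R) :=
  QuotientAddGroup.Quotient.addCommGroup (K0Rels R)

open Matrix

namespace K0Morita

variable (A : Type u) [Ring A] (n : ℕ)

/-- The `Mₙ(A)`-module of columns with entries in an `A`-module `M`. -/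
def MV (M : Type u) : Type u := Fin n → M

variable (M N : Type u) [AddCommGroup M] [Module A M] [AddCommGroup N] [Module A N]

instance : AddCommGroup (MV n M) := Pi.addCommGroup

instance : Module (Matrix (Fin n) (Fin n) A) (MV n M) where
  smul x v := fun i => ∑ j, x i j • v j
  one_smul v := funext fun i => by
    show (∑ j, (1 : Matrix (Fin n) (Fin n) A) i j • v j) = v i
    simp [Matrix.one_apply, ite_smul, Finset.sum_ite_eq]
    exact (Finset.sum_ite_eq Finset.univ i v).trans (if_pos (Finset.mem_univ i))
  mul_smul x y v := funext fun i => by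
    show (∑ j, (x * y) i j • v j) = ∑ k, x i k • ∑ j, y k j • v j
    simp only [Matrix.mul_apply, Finset.sum_smul, Finset.smul_sum, mul_smul]
    exact Finset.sum_comm
  smul_zero x := funext fun i => by
    show (∑ j, x i j • (0 : M)) = 0
    simp
  smul_add x v w := funext fun i => by
    show (∑ j, x i j • (v j + w j)) = (∑ j, x i j • v j) + ∑ j, x i j • w j
    simp [smul_add, Finset.sum_add_distrib]
  add_smul x y v := funext fun i => by
    show (∑ j, (x i j + y i j) • v j) = (∑ j, x i j • v j) + ∑ j, y i j • v j
    simp [add_smul, Finset.sum_add_distrib]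
  zero_smul v := funext fun i => by
    show (∑ j, (0 : Matrix (Fin n) (Fin n) A) i j • v j) = 0
    simp

variable {n M N}

@[simp] lemma MV.smul_apply (x : Matrix (Fin n) (Fin n) A) (v : MV n M) (i : Fin n) :
    (x • v) i = ∑ j, x i j • v j := rfl

@[simp] lemma MV.add_apply (v w : MV n M) (i : Fin n) : (v + w) i = v i + w i := rfl

variable {A}

/-- Componentwise application of an `A`-linear map is `Mₙ(A)`-linear on columns. -/
def MV.map (f : M →ₗ[A] N) : MV n M →ₗ[Matrix (Fin n) (Fin n) A] MV n N where
  toFun v := fun i => f (v i)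
  map_add' v w := funext fun i => by simp; rfl
  map_smul' x v := funext fun i => by simp [MV.smul_apply]; rfl

@[simp] lemma MV.map_apply (f : M →ₗ[A] N) (v : MV n M) (i : Fin n) :
    MV.map f v i = f (v i) := rfl

/-- `MV` preserves linear equivalences. -/
def MV.congr (e : M ≃ₗ[A] N) : MV n M ≃ₗ[Matrix (Fin n) (Fin n) A] MV n N :=
  { MV.map (n := n) e.toLinearMap with
    invFun := MV.map (n := n) e.symm.toLinearMap
    left_inv := fun v => funext fun i => by simp [MV.map]; exact e.symm_apply_apply (v i)
    right_inv := fun v => funext fun i => by simp [MV.map]; exact e.apply_symm_apply (v i) }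

/-- `MV` commutes with products. -/
def MV.prodEquiv : MV n (M × N) ≃ₗ[Matrix (Fin n) (Fin n) A] MV n M × MV n N where
  toFun v := (fun i => (v i).1, fun i => (v i).2)
  invFun w := fun i => (w.1 i, w.2 i)
  left_inv v := funext fun i => rfl
  right_inv w := rfl
  map_add' v w := rfl
  map_smul' x v := by
    refine Prod.ext (funext fun i => ?_) (funext fun i => ?_) <;>
      simp [MV.smul_apply, Prod.fst_sum, Prod.snd_sum] <;> rfl

end K0Morita

namespace K0Morita

variable {A : Type u} [Ring A] {n : ℕ} [NeZero n]
variable {M : Type u} [AddCommGroup M] [Module A M]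

/-- Embedding of the column module `MV n (Fin k → A)` into the free
`Mₙ(A)`-module `Fin k → Mₙ(A)` (as the matrices supported on column 0). -/
def MV.toFree (k : ℕ) :
    MV n (Fin k → A) →ₗ[Matrix (Fin n) (Fin n) A] (Fin k → Matrix (Fin n) (Fin n) A) where
  toFun v := fun s => Matrix.of fun i j => if j = 0 then v i s else 0
  map_add' v w := by
    funext s
    ext i j
    by_cases h : j = 0 <;> simp [h]
  map_smul' x v := by
    funext s
    ext i j
    by_cases h : j = 0 <;>
      simp [h, MV.smul_apply, Matrix.mul_apply, Finset.sum_apply, Finset.mul_sum,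
        Finset.sum_ite_eq, mul_ite]

/-- Projection from the free `Mₙ(A)`-module `Fin k → Mₙ(A)` onto the column
module `MV n (Fin k → A)` (read off column 0). -/
def MV.fromFree (k : ℕ) :
    (Fin k → Matrix (Fin n) (Fin n) A) →ₗ[Matrix (Fin n) (Fin n) A] MV n (Fin k → A) where
  toFun w := fun i s => w s i 0
  map_add' v w := rfl
  map_smul' x w := by
    funext i s
    show (x * w s) i 0 = (∑ p, x i p • (fun i s => w s i 0) p) s
    simp [Matrix.mul_apply, Finset.sum_apply]

lemma MV.fromFree_toFree (k : ℕ) (v : MV n (Fin k → A)) :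
    MV.fromFree k (MV.toFree (A := A) k v) = v := by
  funext i s
  show (if (0 : Fin n) = 0 then v i s else 0) = v i s
  simp

lemma MV.map_surjective {N : Type u} [AddCommGroup N] [Module A N]
    (f : M →ₗ[A] N) (hf : Function.Surjective f) :
    Function.Surjective (MV.map (n := n) f) := by
  intro v
  choose g hg using hf
  exact ⟨fun i => g (v i), funext fun i => hg (v i)⟩

instance MV.finite [Module.Finite A M] :
    Module.Finite (Matrix (Fin n) (Fin n) A) (MV n M) := by
  obtain ⟨k, f, hf⟩ := Module.Finite.exists_fin' A M
  refine Module.Finite.of_surjective ((MV.map (n := n) f).comp (MV.fromFree k)) ?_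
  refine (MV.map_surjective f hf).comp ?_
  exact Function.LeftInverse.surjective (MV.fromFree_toFree k)

instance MV.projective [Module.Finite A M] [Module.Projective A M] :
    Module.Projective (Matrix (Fin n) (Fin n) A) (MV n M) := by
  obtain ⟨k, f, g, hsurj, _, hfg⟩ := Module.Finite.exists_comp_eq_id_of_projective A M
  refine Module.Projective.of_split
    ((MV.toFree k).comp (MV.map (n := n) g))
    ((MV.map (n := n) f).comp (MV.fromFree k)) ?_
  ext v
  show MV.map f (MV.fromFree k (MV.toFree k (MV.map g v))) = v
  rw [MV.fromFree_toFree]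
  funext i
  show f (g (v i)) = v i
  exact congrArg (fun (h : M →ₗ[A] M) => h (v i)) hfg

end K0Morita

namespace K0Morita

variable (A : Type u) [Ring A] (n : ℕ) [NeZero n]
variable (P Q : Type u) [AddCommGroup P] [Module (Matrix (Fin n) (Fin n) A) P]
  [AddCommGroup Q] [Module (Matrix (Fin n) (Fin n) A) Q]

/-- The idempotent matrix `e₁₁`. -/
def e00 : Matrix (Fin n) (Fin n) A := Matrix.single 0 0 1

/-- The subgroup `e₁₁ • P` of a `Mₙ(A)`-module `P`, realised as the fixed
points of `e₁₁`. -/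
def fixSub : AddSubgroup P where
  carrier := {x | e00 A n • x = x}
  add_mem' := by
    intro a b ha hb
    show e00 A n • (a + b) = a + b
    rw [smul_add, ha, hb]
  zero_mem' := smul_zero _
  neg_mem' := by
    intro a ha
    show e00 A n • (-a) = -a
    rw [smul_neg, ha]

/-- `e₁₁P` as a type. -/
def Fix : Type u := fixSub A n P

instance : AddCommGroup (Fix A n P) :=
  inferInstanceAs (AddCommGroup (fixSub A n P))

variable {P Q}

lemma Fix.prop (x : Fix A n P) : e00 A n • x.1 = x.1 := x.2

variable {A n}

@[simp] lemma Fix.coe_add (x y : Fix A n P) : (x + y).1 = x.1 + y.1 := rfl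
@[simp] lemma Fix.coe_zero : (0 : Fix A n P).1 = 0 := rfl

lemma e00_smul_stdBasisMatrix (a : A) :
    e00 A n * Matrix.single 0 0 a = Matrix.single 0 0 a := by
  rw [e00, single_mul_single_same, one_mul]

instance : Module A (Fix A n P) where
  smul a x := ⟨Matrix.single 0 0 a • x.1, by
    show e00 A n • _ = _
    rw [← mul_smul, e00_smul_stdBasisMatrix]⟩
  one_smul x := Subtype.ext (x.2 : e00 A n • x.1 = x.1)
  mul_smul a b x := Subtype.ext <| by
    show Matrix.single 0 0 (a * b) • x.1
        = Matrix.single 0 0 a • Matrix.single 0 0 b • x.1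
    rw [← mul_smul, single_mul_single_same]
  smul_zero a := Subtype.ext <| by
    show Matrix.single 0 0 a • (0 : P) = 0
    simp
  smul_add a x y := Subtype.ext <| by
    show Matrix.single 0 0 a • (x.1 + y.1) = _
    rw [smul_add]; rfl
  add_smul a b x := Subtype.ext <| by
    show Matrix.single 0 0 (a + b) • x.1 = _
    rw [single_add, Module.add_smul]; rfl
  zero_smul x := Subtype.ext <| by
    show Matrix.single 0 0 (0 : A) • x.1 = 0
    rw [single_zero, zero_smul]

@[simp] lemma Fix.coe_smul (a : A) (x : Fix A n P) :
    (a • x : Fix A n P).1 = Matrix.single (0 : Fin n) (0 : Fin n) a • x.1 := rfl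

/-- Functoriality of `Fix` on `Mₙ(A)`-linear maps. -/
def Fix.map (f : P →ₗ[Matrix (Fin n) (Fin n) A] Q) : Fix A n P →ₗ[A] Fix A n Q where
  toFun x := ⟨f x.1, by show e00 A n • _ = _; rw [← f.map_smul, x.2]⟩
  map_add' x y := Subtype.ext (map_add f x.1 y.1)
  map_smul' a x := Subtype.ext <| by
    show f (Matrix.single 0 0 a • x.1) = Matrix.single 0 0 a • f x.1
    exact f.map_smul _ _

@[simp] lemma Fix.map_coe (f : P →ₗ[Matrix (Fin n) (Fin n) A] Q) (x : Fix A n P) :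
    (Fix.map f x).1 = f x.1 := rfl

/-- `Fix` preserves linear equivalences. -/
def Fix.congr (e : P ≃ₗ[Matrix (Fin n) (Fin n) A] Q) : Fix A n P ≃ₗ[A] Fix A n Q :=
  { Fix.map e.toLinearMap with
    invFun := Fix.map e.symm.toLinearMap
    left_inv := fun x => Subtype.ext (e.symm_apply_apply x.1)
    right_inv := fun x => Subtype.ext (e.apply_symm_apply x.1) }

/-- `Fix` commutes with products. -/
def Fix.prodEquiv : Fix A n (P × Q) ≃ₗ[A] Fix A n P × Fix A n Q where
  toFun x := (⟨x.1.1, congrArg Prod.fst x.2⟩, ⟨x.1.2, congrArg Prod.snd x.2⟩)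
  invFun y := ⟨(y.1.1, y.2.1), Prod.ext y.1.2 y.2.2⟩
  left_inv x := Subtype.ext rfl
  right_inv y := rfl
  map_add' x y := rfl
  map_smul' a x := rfl

end K0Morita

namespace K0Morita

variable {A : Type u} [Ring A] {n : ℕ} [NeZero n]
variable {P : Type u} [AddCommGroup P] [Module (Matrix (Fin n) (Fin n) A) P]

lemma std00_mul_apply (a : A) (M : Matrix (Fin n) (Fin n) A) (i j : Fin n) :
    (Matrix.single (0 : Fin n) (0 : Fin n) a * M) i j
      = if i = 0 then a * M 0 j else 0 := by
  by_cases h : i = 0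
  · subst h; rw [single_mul_apply_same, if_pos rfl]
  · rw [single_mul_apply_of_ne _ _ _ _ _ h, if_neg h]

lemma e00_mul_apply (M : Matrix (Fin n) (Fin n) A) (i j : Fin n) :
    (e00 A n * M) i j = if i = 0 then M 0 j else 0 := by
  rw [e00, std00_mul_apply]
  by_cases h : i = 0 <;> simp [h]

/-- The matrix supported on row 0 with that row given by `w s`. -/
def rowMat {k : ℕ} (w : Fin k → Fin n → A) : Fin k → Matrix (Fin n) (Fin n) A :=
  fun s => Matrix.of fun i j => if i = 0 then w s j else 0

@[simp] lemma rowMat_apply {k : ℕ} (w : Fin k → Fin n → A) (s : Fin k) (i j : Fin n) :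
    rowMat w s i j = if i = 0 then w s j else 0 := rfl

/-- Reading off row 0 embeds `Fix A n (Fin k → Mₙ(A))` into the free `A`-module
`Fin k → Fin n → A`. -/
def Fix.toFree (k : ℕ) :
    Fix A n (Fin k → Matrix (Fin n) (Fin n) A) →ₗ[A] (Fin k → Fin n → A) where
  toFun x := fun s j => x.1 s 0 j
  map_add' x y := rfl
  map_smul' a x := by
    funext s j
    show ((Matrix.single (0 : Fin n) (0 : Fin n) a • x.1) s) 0 j = a • x.1 s 0 j
    rw [Pi.smul_apply, smul_eq_mul, std00_mul_apply, if_pos rfl, smul_eq_mul]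

/-- The matrices supported on row 0 give a section of `Fix.toFree`. -/
def Fix.fromFree (k : ℕ) :
    (Fin k → Fin n → A) →ₗ[A] Fix A n (Fin k → Matrix (Fin n) (Fin n) A) where
  toFun w := ⟨rowMat w, by
    funext s
    show e00 A n * rowMat w s = rowMat w s
    ext i j
    rw [e00_mul_apply]
    by_cases h : i = 0 <;> simp [h]⟩
  map_add' v w := Subtype.ext <| by
    funext s
    ext i j
    show rowMat (v + w) s i j = rowMat v s i j + rowMat w s i j
    by_cases h : i = 0 <;> simp [h]
  map_smul' a w := Subtype.ext <| by
    funext s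
    show rowMat (a • w) s = (Matrix.single (0 : Fin n) (0 : Fin n) a • rowMat w) s
    rw [Pi.smul_apply, smul_eq_mul]
    ext i j
    rw [std00_mul_apply]
    by_cases h : i = 0 <;> simp [h]
  
lemma Fix.fromFree_toFree (k : ℕ) (x : Fix A n (Fin k → Matrix (Fin n) (Fin n) A)) :
    Fix.fromFree k (Fix.toFree k x) = x := by
  refine Subtype.ext ?_
  funext s
  have hx : e00 A n * x.1 s = x.1 s := congrFun x.2 s
  ext i j
  show (if i = 0 then x.1 s 0 j else 0) = x.1 s i j
  conv_rhs => rw [← hx]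
  rw [e00_mul_apply]

lemma Fix.map_surjective {Q : Type u} [AddCommGroup Q] [Module (Matrix (Fin n) (Fin n) A) Q]
    (f : P →ₗ[Matrix (Fin n) (Fin n) A] Q) (hf : Function.Surjective f) :
    Function.Surjective (Fix.map (A := A) (n := n) f) := by
  rintro ⟨y, hy⟩
  obtain ⟨x, rfl⟩ := hf y
  refine ⟨⟨e00 A n • x, show e00 A n • e00 A n • x = e00 A n • x by
    rw [← mul_smul, e00, single_mul_single_same, one_mul]⟩, ?_⟩
  refine Subtype.ext ?_
  show f (e00 A n • x) = f x
  rw [f.map_smul]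
  exact hy

instance Fix.finite [Module.Finite (Matrix (Fin n) (Fin n) A) P] :
    Module.Finite A (Fix A n P) := by
  obtain ⟨k, f, hf⟩ := Module.Finite.exists_fin' (Matrix (Fin n) (Fin n) A) P
  refine Module.Finite.of_surjective ((Fix.map f).comp (Fix.fromFree k)) ?_
  refine (Fix.map_surjective f hf).comp ?_
  exact Function.LeftInverse.surjective (Fix.fromFree_toFree k)

instance Fix.projective [Module.Finite (Matrix (Fin n) (Fin n) A) P]
    [Module.Projective (Matrix (Fin n) (Fin n) A) P] :
    Module.Projective A (Fix A n P) := by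
  obtain ⟨k, f, g, hsurj, _, hfg⟩ :=
    Module.Finite.exists_comp_eq_id_of_projective (Matrix (Fin n) (Fin n) A) P
  refine Module.Projective.of_split
    ((Fix.toFree k).comp (Fix.map g)) ((Fix.map f).comp (Fix.fromFree k)) ?_
  ext x
  refine Subtype.ext ?_
  show (Fix.map f (Fix.fromFree k (Fix.toFree k (Fix.map g x)))).1 = x.1
  rw [Fix.fromFree_toFree]
  show f (g x.1) = x.1
  exact congrArg (fun (h : P →ₗ[Matrix (Fin n) (Fin n) A] P) => h x.1) hfg

end K0Morita

namespace K0Morita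

variable {A : Type u} [Ring A] {n : ℕ} [NeZero n]
variable {M : Type u} [AddCommGroup M] [Module A M]
variable {P : Type u} [AddCommGroup P] [Module (Matrix (Fin n) (Fin n) A) P]

lemma std00_smul_MV (a : A) (v : MV n M) (i : Fin n) :
    (Matrix.single (0 : Fin n) (0 : Fin n) a • v) i = if i = 0 then a • v 0 else 0 := by
  rw [MV.smul_apply]
  rw [Finset.sum_eq_single (0 : Fin n)]
  · by_cases h : i = 0
    · subst h; rw [single_apply_same, if_pos rfl]
    · rw [single_apply_of_ne, if_neg h, zero_smul]
      exact fun hc => h hc.1.symm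
  · intro j _ hj
    rw [single_apply_of_ne, zero_smul]
    exact fun hc => hj hc.2.symm
  · intro h; exact absurd (Finset.mem_univ _) h

lemma e00_smul_MV (v : MV n M) (i : Fin n) :
    (e00 A n • v) i = if i = 0 then v 0 else 0 := by
  rw [e00, std00_smul_MV]
  by_cases h : i = 0 <;> simp [h]

/-- The column vector supported at index 0. -/
def sing (m : M) : MV n M := fun i => if i = 0 then m else 0

@[simp] lemma sing_apply (m : M) (i : Fin n) : sing m i = if i = 0 then m else 0 := rfl

/-- The unit of the Morita adjunction: `M ≅ e₁₁(Mⁿ)` as `A`-modules. -/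
def unitEquiv : M ≃ₗ[A] Fix A n (MV n M) where
  toFun m := ⟨sing m, by
    funext i
    rw [e00_smul_MV]
    by_cases h : i = 0 <;> simp [h]⟩
  invFun x := x.1 0
  left_inv m := by simp
  right_inv x := Subtype.ext <| by
    funext i
    show (if i = 0 then x.1 0 else 0) = x.1 i
    conv_rhs => rw [← x.2]
    rw [e00_smul_MV]
  map_add' m m' := Subtype.ext <| by
    funext i
    show sing (m + m') i = sing m i + sing m' i
    by_cases h : i = 0 <;> simp [h, sing]
  map_smul' a m := Subtype.ext <| by
    funext i
    show sing (a • m) i = (Matrix.single (0 : Fin n) (0 : Fin n) a • sing m) i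
    rw [std00_smul_MV]
    by_cases h : i = 0 <;> simp [h]

/-- The additive group homomorphism forgetting the `Fix` constraint. -/
def Fix.valHom : Fix A n P →+ P where
  toFun := Subtype.val
  map_zero' := rfl
  map_add' _ _ := rfl

lemma Fix.coe_sum {ι : Type*} (s : Finset ι) (f : ι → Fix A n P) :
    (∑ j ∈ s, f j).1 = ∑ j ∈ s, (f j).1 :=
  map_sum Fix.valHom f s

lemma one_eq_sum_std : (∑ i, Matrix.single i i (1 : A)) = (1 : Matrix (Fin n) (Fin n) A) := by
  ext a b
  rw [Matrix.sum_apply]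
  by_cases h : a = b
  · subst h
    rw [Matrix.one_apply_eq, Finset.sum_eq_single a]
    · rw [single_apply_same]
    · intro i _ hi
      apply single_apply_of_ne
      rintro ⟨h1, h2⟩
      exact hi h1
    · intro h; exact absurd (Finset.mem_univ _) h
  · rw [Matrix.one_apply_ne h]
    refine Finset.sum_eq_zero fun i _ => ?_
    apply single_apply_of_ne
    rintro ⟨h1, h2⟩
    exact h (h1 ▸ h2)

lemma mul_std_col (x : Matrix (Fin n) (Fin n) A) (j : Fin n) :
    x * Matrix.single j (0 : Fin n) (1 : A) = ∑ i, Matrix.single i (0 : Fin n) (x i j) := by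
  ext a b
  rw [Matrix.sum_apply]
  by_cases h : b = 0
  · subst h
    rw [mul_single_apply_same, mul_one]
    rw [Finset.sum_eq_single a]
    · rw [single_apply_same]
    · intro i _ hi
      apply single_apply_of_ne
      rintro ⟨h1, h2⟩
      exact hi h1
    · intro h; exact absurd (Finset.mem_univ _) h
  · rw [mul_single_apply_of_ne _ _ _ _ _ h]
    refine (Finset.sum_eq_zero fun i _ => ?_).symm
    apply single_apply_of_ne
    rintro ⟨h1, h2⟩
    exact h h2.symm

/-- The counit of the Morita adjunction: `(e₁₁P)ⁿ ≅ P` as `Mₙ(A)`-modules. -/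
def counitEquiv : MV n (Fix A n P) ≃ₗ[Matrix (Fin n) (Fin n) A] P where
  toFun v := ∑ i : Fin n, Matrix.single i (0 : Fin n) (1 : A) • (v i).1
  invFun x := fun i => ⟨Matrix.single (0 : Fin n) i (1 : A) • x, by
    show e00 A n • _ = _
    rw [← mul_smul, e00, single_mul_single_same, one_mul]⟩
  left_inv v := by
    funext i
    refine Subtype.ext ?_
    show Matrix.single (0 : Fin n) i (1 : A)
        • (∑ j : Fin n, Matrix.single j (0 : Fin n) (1 : A) • (v j).1) = (v i).1
    rw [Finset.smul_sum]
    rw [Finset.sum_eq_single i]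
    · rw [← mul_smul, single_mul_single_same, one_mul]
      exact (v i).2
    · intro j _ hj
      rw [← mul_smul, Matrix.single_mul_single_of_ne (h := hj.symm), zero_smul]
    · intro h; exact absurd (Finset.mem_univ _) h
  right_inv x := by
    show (∑ i : Fin n, Matrix.single i (0 : Fin n) (1 : A)
        • (Matrix.single (0 : Fin n) i (1 : A) • x)) = x
    calc ∑ i : Fin n, Matrix.single i (0 : Fin n) (1 : A)
          • (Matrix.single (0 : Fin n) i (1 : A) • x)
        = ∑ i : Fin n, Matrix.single i i (1 : A) • x :=
          Finset.sum_congr rfl fun i _ => by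
            rw [← mul_smul, single_mul_single_same, one_mul]
      _ = (∑ i : Fin n, Matrix.single i i (1 : A)) • x := (Finset.sum_smul).symm
      _ = x := by rw [one_eq_sum_std, one_smul]
  map_add' v w := by
    show (∑ i : Fin n, Matrix.single i (0 : Fin n) (1 : A) • ((v i).1 + (w i).1)) = _
    rw [← Finset.sum_add_distrib]
    exact Finset.sum_congr rfl fun i _ => smul_add _ _ _
  map_smul' x v := by
    show (∑ i : Fin n, Matrix.single i (0 : Fin n) (1 : A) • ((x • v) i).1)
      = x • ∑ i : Fin n, Matrix.single i (0 : Fin n) (1 : A) • (v i).1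
    have lhs : ∀ i, ((x • v) i).1
        = ∑ j : Fin n, Matrix.single (0 : Fin n) (0 : Fin n) (x i j) • (v j).1 := by
      intro i
      show ((∑ j, x i j • v j : Fix A n P)).1 = _
      rw [Fix.coe_sum]
      exact Finset.sum_congr rfl fun j _ => rfl
    rw [Finset.smul_sum]
    calc ∑ i : Fin n, Matrix.single i (0 : Fin n) (1 : A) • ((x • v) i).1
        = ∑ i : Fin n, ∑ j : Fin n, Matrix.single i (0 : Fin n) (x i j) • (v j).1 := by
          refine Finset.sum_congr rfl fun i _ => ?_
          rw [lhs i, Finset.smul_sum]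
          refine Finset.sum_congr rfl fun j _ => ?_
          rw [← mul_smul, single_mul_single_same, one_mul]
      _ = ∑ j, ∑ i : Fin n, Matrix.single i (0 : Fin n) (x i j) • (v j).1 := Finset.sum_comm
      _ = ∑ j : Fin n, (x * Matrix.single j (0 : Fin n) (1 : A)) • (v j).1 := by
          refine Finset.sum_congr rfl fun j _ => ?_
          rw [mul_std_col, Finset.sum_smul]
      _ = ∑ j : Fin n, x • Matrix.single j (0 : Fin n) (1 : A) • (v j).1 := by
          refine Finset.sum_congr rfl fun j _ => ?_
          rw [mul_smul]

end K0Morita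

namespace K0Morita

variable (R : Type u) [Ring R]

/-- The quotient map onto `K0 R`. -/
def K0mk : FreeAbelianGroup (FGProj R) →+ K0 R := QuotientAddGroup.mk' (K0Rels R)

variable {R}

lemma K0mk_rel {x : FreeAbelianGroup (FGProj R)} (h : x ∈ K0Rels R) : K0mk R x = 0 :=
  (QuotientAddGroup.eq_zero_iff x).mpr h

lemma K0mk_eq_of_iso (P Q : FGProj R) (e : P.carrier ≃ₗ[R] Q.carrier) :
    K0mk R (FreeAbelianGroup.of P) = K0mk R (FreeAbelianGroup.of Q) := by
  have h : FreeAbelianGroup.of P - FreeAbelianGroup.of Q ∈ K0Rels R :=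
    AddSubgroup.subset_closure (Or.inl ⟨P, Q, e, rfl⟩)
  have := K0mk_rel h
  rw [map_sub] at this
  exact sub_eq_zero.mp this

lemma K0mk_eq_of_prod (P Q T : FGProj R) (e : T.carrier ≃ₗ[R] P.carrier × Q.carrier) :
    K0mk R (FreeAbelianGroup.of T)
      = K0mk R (FreeAbelianGroup.of P) + K0mk R (FreeAbelianGroup.of Q) := by
  have h : FreeAbelianGroup.of T - FreeAbelianGroup.of P - FreeAbelianGroup.of Q ∈ K0Rels R :=
    AddSubgroup.subset_closure (Or.inr ⟨P, Q, T, e, rfl⟩)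
  have := K0mk_rel h
  rw [map_sub, map_sub, sub_sub, sub_eq_zero] at this
  exact this

variable {S : Type u} [Ring S]

/-- A function on bundled f.g. projective modules compatible with isomorphisms
and direct sums induces a homomorphism on `K0`. -/
def K0map (Φ : FGProj R → FGProj S)
    (h1 : ∀ P Q : FGProj R, (P.carrier ≃ₗ[R] Q.carrier) →
      Nonempty ((Φ P).carrier ≃ₗ[S] (Φ Q).carrier))
    (h2 : ∀ P Q T : FGProj R, (T.carrier ≃ₗ[R] P.carrier × Q.carrier) →
      Nonempty ((Φ T).carrier ≃ₗ[S] (Φ P).carrier × (Φ Q).carrier)) :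
    K0 R →+ K0 S :=
  QuotientAddGroup.lift (K0Rels R)
    (FreeAbelianGroup.lift fun P => K0mk S (FreeAbelianGroup.of (Φ P)))
    (by
      have hle : K0Rels R ≤
          (FreeAbelianGroup.lift fun P => K0mk S (FreeAbelianGroup.of (Φ P))).ker := by
        rw [K0Rels, AddSubgroup.closure_le]
        rintro x (⟨P, Q, e, rfl⟩ | ⟨P, Q, T, e, rfl⟩) <;>
          simp only [SetLike.mem_coe, AddMonoidHom.mem_ker, map_sub, FreeAbelianGroup.lift_apply_of]
        · obtain ⟨e'⟩ := h1 P Q e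
          rw [K0mk_eq_of_iso _ _ e', sub_self]
        · obtain ⟨e'⟩ := h2 P Q T e
          rw [K0mk_eq_of_prod _ _ _ e', add_sub_cancel_left, sub_self]
      exact fun x hx => AddMonoidHom.mem_ker.mp (hle hx))

lemma K0map_mk (Φ : FGProj R → FGProj S) (h1) (h2) (P : FGProj R) :
    K0map Φ h1 h2 (K0mk R (FreeAbelianGroup.of P))
      = K0mk S (FreeAbelianGroup.of (Φ P)) := by
  show (FreeAbelianGroup.lift fun P => K0mk S (FreeAbelianGroup.of (Φ P)))
      (FreeAbelianGroup.of P) = _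
  rw [FreeAbelianGroup.lift_apply_of]

/-- Two inverse-up-to-isomorphism functors on f.g. projective modules induce an
isomorphism of `K0` groups. -/
noncomputable def K0congr (Φ : FGProj R → FGProj S) (Ψ : FGProj S → FGProj R)
    (h1 : ∀ P Q : FGProj R, (P.carrier ≃ₗ[R] Q.carrier) →
      Nonempty ((Φ P).carrier ≃ₗ[S] (Φ Q).carrier))
    (h2 : ∀ P Q T : FGProj R, (T.carrier ≃ₗ[R] P.carrier × Q.carrier) →
      Nonempty ((Φ T).carrier ≃ₗ[S] (Φ P).carrier × (Φ Q).carrier))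
    (h1' : ∀ P Q : FGProj S, (P.carrier ≃ₗ[S] Q.carrier) →
      Nonempty ((Ψ P).carrier ≃ₗ[R] (Ψ Q).carrier))
    (h2' : ∀ P Q T : FGProj S, (T.carrier ≃ₗ[S] P.carrier × Q.carrier) →
      Nonempty ((Ψ T).carrier ≃ₗ[R] (Ψ P).carrier × (Ψ Q).carrier))
    (hΨΦ : ∀ P : FGProj R, Nonempty ((Ψ (Φ P)).carrier ≃ₗ[R] P.carrier))
    (hΦΨ : ∀ Q : FGProj S, Nonempty ((Φ (Ψ Q)).carrier ≃ₗ[S] Q.carrier)) :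
    K0 R ≃+ K0 S := by
  refine
    { toFun := K0map Φ h1 h2
      invFun := K0map Ψ h1' h2'
      left_inv := ?_
      right_inv := ?_
      map_add' := map_add _ }
  · have key : (K0map Ψ h1' h2').comp (K0map Φ h1 h2) = AddMonoidHom.id (K0 R) := by
      apply QuotientAddGroup.addMonoidHom_ext
      ext P
      show K0map Ψ h1' h2' (K0map Φ h1 h2 (K0mk R (FreeAbelianGroup.of P)))
        = K0mk R (FreeAbelianGroup.of P)
      rw [K0map_mk, K0map_mk]
      exact K0mk_eq_of_iso _ _ (hΨΦ P).some
    intro x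
    exact DFunLike.congr_fun key x
  · have key : (K0map Φ h1 h2).comp (K0map Ψ h1' h2') = AddMonoidHom.id (K0 S) := by
      apply QuotientAddGroup.addMonoidHom_ext
      ext Q
      show K0map Φ h1 h2 (K0map Ψ h1' h2' (K0mk S (FreeAbelianGroup.of Q)))
        = K0mk S (FreeAbelianGroup.of Q)
      rw [K0map_mk, K0map_mk]
      exact K0mk_eq_of_iso _ _ (hΦΨ Q).some
    intro x
    exact DFunLike.congr_fun key x

end K0Morita

/-- Morita invariance of K₀ for matrix rings: K₀(Mₙ(A)) ≅ K₀(A). -/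
theorem K0_matrix_ring_iso (A : Type u) [Ring A] (n : ℕ) (hn : 0 < n) :
    Nonempty (K0 (Matrix (Fin n) (Fin n) A) ≃+ K0 A) := by
  haveI : NeZero n := ⟨hn.ne'⟩
  open K0Morita in
  exact
    ⟨K0congr
      (fun P => ⟨Fix A n P.carrier⟩)
      (fun M => ⟨MV n M.carrier⟩)
      (fun P Q e => ⟨Fix.congr e⟩)
      (fun P Q T e => ⟨(Fix.congr e).trans Fix.prodEquiv⟩)
      (fun P Q e => ⟨MV.congr e⟩)
      (fun P Q T e => ⟨(MV.congr e).trans MV.prodEquiv⟩)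
      (fun P => ⟨counitEquiv⟩)
      (fun M => ⟨unitEquiv.symm⟩)⟩
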